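/- Suppose (x, X, y, Y₁₂, α) lacks only (P4a) and α₁ > 0. Then y₁ − Y₁₂ > 0, and the point (x̄, X̄, y, Y₁₂, ᾱ) also lacks only (P4a), where x̄ := (x₁ − α₁, x₂), X̄ := [[X₁₁ − α₁²/(y₁−Y₁₂), X₁₂], [X₁₂, X₂₂]], and ᾱ := (0, α₂). -/

import Mathlib

open Matrix

set_option linter.unusedVariables false

/-- Linear conditions (L). -/
def Lcond (x1 x2 X11 X12 X22 y1 y2 Y12 a1 a2 : ℝ) : Prop :=
  X11 ≤ x1 ∧ x1 ≤ y1 ∧ X22 ≤ x2 ∧ x2 ≤ y2 ∧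
  max 0 (x1 - a1 + x2 - a2 - Y12) ≤ X12 ∧ X12 ≤ min (x1 - a1) (x2 - a2) ∧
  0 ≤ a1 ∧ a1 ≤ y1 - Y12 ∧ 0 ≤ a2 ∧ a2 ≤ y2 - Y12 ∧
  max 0 (y1 + y2 - 1) ≤ Y12 ∧ Y12 ≤ min y1 y2

/-- PSD condition (P3). -/
def P3cond (x1 x2 X11 X12 X22 y1 y2 Y12 a1 a2 : ℝ) : Prop :=
  (!![Y12, x1 - a1, x2 - a2;
      x1 - a1, x1 - a1, X12;
      x2 - a2, X12, x2 - a2] : Matrix (Fin 3) (Fin 3) ℝ).PosSemidef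

/-- PSD condition (P4a). -/
def P4acond (x1 x2 X11 X12 X22 y1 y2 Y12 a1 a2 : ℝ) : Prop :=
  (!![y1 - Y12, 0, a1, 0;
      0, Y12, x1 - a1, x2 - a2;
      a1, x1 - a1, X11, X12;
      0, x2 - a2, X12, x2 - a2] : Matrix (Fin 4) (Fin 4) ℝ).PosSemidef

/-- PSD condition (P4b). -/
def P4bcond (x1 x2 X11 X12 X22 y1 y2 Y12 a1 a2 : ℝ) : Prop :=
  (!![y2 - Y12, 0, 0, a2;
      0, Y12, x1 - a1, x2 - a2;
      0, x1 - a1, x1 - a1, X12;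
      a2, x2 - a2, X12, X22] : Matrix (Fin 4) (Fin 4) ℝ).PosSemidef

/-- PSD condition (P5). -/
def P5cond (x1 x2 X11 X12 X22 y1 y2 Y12 a1 a2 : ℝ) : Prop :=
  (!![y1 - Y12, 0, 0, a1, 0;
      0, y2 - Y12, 0, 0, a2;
      0, 0, Y12, x1 - a1, x2 - a2;
      a1, 0, x1 - a1, X11, X12;
      0, a2, x2 - a2, X12, X22] : Matrix (Fin 5) (Fin 5) ℝ).PosSemidef

/-- (x, X, y, Y₁₂, α) lacks only (P4a): it satisfies (L), (P3), (P4b), (P5)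
but violates (P4a). -/
def LacksOnlyP4a (x1 x2 X11 X12 X22 y1 y2 Y12 a1 a2 : ℝ) : Prop :=
  Lcond x1 x2 X11 X12 X22 y1 y2 Y12 a1 a2 ∧
  P3cond x1 x2 X11 X12 X22 y1 y2 Y12 a1 a2 ∧
  P4bcond x1 x2 X11 X12 X22 y1 y2 Y12 a1 a2 ∧
  P5cond x1 x2 X11 X12 X22 y1 y2 Y12 a1 a2 ∧
  ¬ P4acond x1 x2 X11 X12 X22 y1 y2 Y12 a1 a2

set_option maxHeartbeats 1000000 in
/-- If (x, X, y, Y₁₂, α) lacks only (P4a) and α₁ > 0, then y₁ − Y₁₂ > 0 and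
(x̄, X̄, y, Y₁₂, ᾱ) also lacks only (P4a), where x̄ = (x₁−α₁, x₂),
X̄₁₁ = X₁₁ − α₁²/(y₁−Y₁₂), and ᾱ = (0, α₂). -/
theorem stmt7 (x1 x2 X11 X12 X22 y1 y2 Y12 a1 a2 : ℝ)
    (h : LacksOnlyP4a x1 x2 X11 X12 X22 y1 y2 Y12 a1 a2) (ha : 0 < a1) :
    0 < y1 - Y12 ∧
      LacksOnlyP4a (x1 - a1) x2 (X11 - a1 ^ 2 / (y1 - Y12)) X12 X22 y1 y2 Y12 0 a2 := by
  obtain ⟨hL, hP3, hP4b, hP5, hnP4a⟩ := h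
  obtain ⟨l1, l2, l3, l4, l5, l6, l7, l8, l9, l10, l11, l12⟩ := hL
  have hc : 0 < y1 - Y12 := lt_of_lt_of_le ha l8
  set q : ℝ := a1 ^ 2 / (y1 - Y12) with hqdef
  have hq : (y1 - Y12) * q = a1 ^ 2 := by
    rw [hqdef]; field_simp
  -- The key 3x3 matrix N
  have hNM : (!![Y12, x1 - a1, x2 - a2;
      x1 - a1, X11 - q, X12;
      x2 - a2, X12, x2 - a2] : Matrix (Fin 3) (Fin 3) ℝ).PosSemidef →
      P4acond x1 x2 X11 X12 X22 y1 y2 Y12 a1 a2 := by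
    intro hN
    refine Matrix.PosSemidef.of_dotProduct_mulVec_nonneg ?_ (fun v => ?_)
    · ext i j; fin_cases i <;> fin_cases j <;> simp [Matrix.conjTranspose_apply, Matrix.vecHead, Matrix.vecTail]
    · have h1 := Matrix.PosSemidef.dotProduct_mulVec_nonneg hN ![v 1, v 2, v 3]
      simp [Matrix.mulVec, dotProduct, Fin.sum_univ_succ] at h1 ⊢
      have hq4 : (y1 - Y12) * q * (v 2) ^ 2 = a1 ^ 2 * (v 2) ^ 2 := by
        linear_combination (v 2) ^ 2 * hq
      have hv : v (Fin.succ 2) = v 3 := rfl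
      refine le_of_mul_le_mul_left ?_ hc
      nlinarith [mul_nonneg hc.le h1, sq_nonneg ((y1 - Y12) * v 0 + a1 * v 2), hq4]
  have hXbar : X11 - q ≤ x1 - a1 := by
    by_contra hcon
    push_neg at hcon
    apply hnP4a
    apply hNM
    refine Matrix.PosSemidef.of_dotProduct_mulVec_nonneg ?_ (fun v => ?_)
    · ext i j; fin_cases i <;> fin_cases j <;> simp [Matrix.conjTranspose_apply, Matrix.vecHead, Matrix.vecTail]
    · have h1 := Matrix.PosSemidef.dotProduct_mulVec_nonneg hP3 v
      simp [P3cond, Matrix.mulVec, dotProduct, Fin.sum_univ_succ] at h1 ⊢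
      nlinarith [h1, mul_nonneg (by linarith : (0:ℝ) ≤ X11 - q - (x1 - a1)) (sq_nonneg (v 1))]
  refine ⟨hc, ⟨?_, ?_, ?_, ?_, ?_⟩⟩
  · -- new Lcond
    obtain ⟨l5a, l5b⟩ := max_le_iff.mp l5
    obtain ⟨l6a, l6b⟩ := le_min_iff.mp l6
    obtain ⟨l11a, l11b⟩ := max_le_iff.mp l11
    refine ⟨hXbar, by linarith, l3, l4, ?_, ?_, le_refl 0, hc.le, l9, l10, l11, l12⟩
    · apply max_le l5a (by linarith)
    · apply le_min (by linarith) l6b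
  · -- new P3
    unfold P3cond
    simp only [sub_zero]
    exact hP3
  · -- new P4b
    unfold P4bcond
    simp only [sub_zero]
    exact hP4b
  · -- new P5
    refine Matrix.PosSemidef.of_dotProduct_mulVec_nonneg ?_ (fun v => ?_)
    · ext i j; fin_cases i <;> fin_cases j <;> simp [Matrix.conjTranspose_apply, Matrix.vecHead, Matrix.vecTail]
    · have h1 := Matrix.PosSemidef.dotProduct_mulVec_nonneg hP5 ![(y1 - Y12) * v 0 - a1 * v 3, (y1 - Y12) * v 1,
        (y1 - Y12) * v 2, (y1 - Y12) * v 3, (y1 - Y12) * v 4]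
      simp [P5cond, Matrix.mulVec, dotProduct, Fin.sum_univ_succ] at h1 ⊢
      have hq5 : (y1 - Y12) ^ 2 * q * (v 3) ^ 2 = (y1 - Y12) * a1 ^ 2 * (v 3) ^ 2 := by
        linear_combination ((y1 - Y12) * (v 3) ^ 2) * hq
      have hv3 : v (Fin.succ 2) = v 3 := rfl
      have hv4 : v (Fin.succ 2).succ = v 4 := rfl
      refine le_of_mul_le_mul_left ?_ (show (0:ℝ) < (y1 - Y12) ^ 2 by positivity)
      nlinarith [h1, hq5]
  · -- new ¬P4a
    intro hnew
    apply hnP4a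
    apply hNM
    refine Matrix.PosSemidef.of_dotProduct_mulVec_nonneg ?_ (fun u => ?_)
    · ext i j; fin_cases i <;> fin_cases j <;> simp [Matrix.conjTranspose_apply, Matrix.vecHead, Matrix.vecTail]
    · have h1 := Matrix.PosSemidef.dotProduct_mulVec_nonneg hnew ![0, u 0, u 1, u 2]
      simp [P4acond, Matrix.mulVec, dotProduct, Fin.sum_univ_succ] at h1 ⊢
      linarith [h1]
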